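/- For all n ≥ 1, the number of overpartition pairs of n satisfies pp̄(n) ≡ 0 (mod 4). -/

import Mathlib

open PowerSeries Finset

noncomputable def ppbar (n : ℕ) : ℚ :=
  PowerSeries.coeff (R := ℚ) n (∏ k ∈ Finset.range (n + 1),
    ((1 + PowerSeries.X ^ (k + 1)) ^ 2 * ((1 - PowerSeries.X ^ (k + 1))⁻¹) ^ 2))

/-- geometric series ∑ X^{m(k+1)} over ℤ -/
noncomputable def geo (k : ℕ) : PowerSeries ℤ :=
  PowerSeries.mk fun n => if (k + 1) ∣ n then 1 else 0

lemma geo_mul (k : ℕ) : geo k * (1 - X ^ (k + 1)) = 1 := by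
  ext n
  rw [mul_sub, mul_one, map_sub, coeff_mul_X_pow', coeff_one]
  simp only [geo, coeff_mk]
  rcases Nat.eq_zero_or_pos n with rfl | hn
  · simp
  · have h1 : ¬ n = 0 := by omega
    by_cases hle : k + 1 ≤ n
    · have hdvd : (k + 1) ∣ n ↔ (k + 1) ∣ n - (k + 1) := by
        constructor
        · intro h; exact (Nat.dvd_sub h dvd_rfl)
        · intro h; have := Nat.dvd_add h (dvd_refl (k+1)); rwa [Nat.sub_add_cancel hle] at this
      by_cases hd : (k + 1) ∣ n
      · simp [hd, hdvd.mp hd, hle, h1]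
      · have hd2 : ¬ (k + 1) ∣ (n - (k + 1)) := fun h2 => hd (hdvd.mpr h2)
        simp [hd, hd2, hle, h1]
    · have hd : ¬ (k + 1) ∣ n := fun h => hle (Nat.le_of_dvd hn h)
      simp [hd, hle, h1]

lemma factor_eq (k : ℕ) :
    (1 + X ^ (k + 1)) ^ 2 * (geo k) ^ 2 =
      1 + 4 * (X ^ (k + 1) * geo k + (X ^ (k + 1) * geo k) ^ 2) := by
  have hg := geo_mul k
  linear_combination ((1 + X ^ (k + 1)) * geo k + 1 + 2 * X ^ (k + 1) * geo k) * hg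

lemma prod_eq (N : ℕ) :
    ∃ h : PowerSeries ℤ,
      ∏ k ∈ Finset.range N, ((1 + X ^ (k + 1)) ^ 2 * (geo k) ^ 2) = 1 + 4 * h := by
  induction N with
  | zero => exact ⟨0, by simp⟩
  | succ N ih =>
    obtain ⟨h, hh⟩ := ih
    refine ⟨h + (X ^ (N + 1) * geo N + (X ^ (N + 1) * geo N) ^ 2) * (1 + 4 * h), ?_⟩
    rw [Finset.prod_range_succ, hh, factor_eq]
    ring

lemma inv_eq_map_geo (k : ℕ) :
    ((1 - X ^ (k + 1))⁻¹ : PowerSeries ℚ) = PowerSeries.map (Int.castRingHom ℚ) (geo k) := by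
  rw [PowerSeries.inv_eq_iff_mul_eq_one]
  · have := congrArg (PowerSeries.map (Int.castRingHom ℚ)) (geo_mul k)
    simpa using this
  · simp

theorem ppbar_mod_four (n : ℕ) (hn : 1 ≤ n) : ∃ m : ℤ, ppbar n = 4 * m := by
  obtain ⟨h, hh⟩ := prod_eq (n + 1)
  refine ⟨PowerSeries.coeff (R := ℤ) n h, ?_⟩
  have key : (∏ k ∈ Finset.range (n + 1),
      ((1 + PowerSeries.X ^ (k + 1)) ^ 2 * (((1 - PowerSeries.X ^ (k + 1)) : PowerSeries ℚ)⁻¹) ^ 2))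
      = PowerSeries.map (Int.castRingHom ℚ)
        (∏ k ∈ Finset.range (n + 1), ((1 + X ^ (k + 1)) ^ 2 * (geo k) ^ 2)) := by
    rw [map_prod]
    refine Finset.prod_congr rfl fun k _ => ?_
    rw [inv_eq_map_geo]
    push_cast [map_mul, map_pow, map_add, map_one, PowerSeries.map_X]
    ring
  rw [ppbar, key, hh, PowerSeries.coeff_map]
  have h4 : PowerSeries.coeff (R := ℤ) n (1 + 4 * h) = 4 * PowerSeries.coeff (R := ℤ) n h := by
    have h4c : (4 : PowerSeries ℤ) = PowerSeries.C (R := ℤ) 4 := by simp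
    rw [map_add, h4c, PowerSeries.coeff_C_mul, PowerSeries.coeff_one, if_neg (by omega)]
    ring
  rw [h4]
  simp [mul_comm]
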